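/- arXiv:2103.01757 — 3 statements merged into one kernel-verified Lean document; each statement's English description precedes it below -/
import Mathlib

section
/- Discrete Hamilton's principle is equivalent to the discrete Euler–Lagrange equations: for a discrete trajectory q_0, …, q_N in ℝⁿ, one has δS_d(q; v) = 0 for every variation v_0, …, v_N with v_0 = v_N = 0 if and only if ∇₁L_d(q_k, q_{k+1}) + ∇₂L_d(q_{k−1}, q_k) = 0 for every k ∈ {1, …, N−1}. -/
open scoped RealInnerProductSpace

section Aux

variable {E : Type*} [NormedAddCommGroup E] [InnerProductSpace ℝ E] [CompleteSpace E]

private lemma inner_gradient_eq' (f : E → ℝ) (x u : E) : ⟪gradient f x, u⟫ = fderiv ℝ f x u := by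
  rw [gradient]
  exact InnerProductSpace.toDual_symm_apply

private lemma hasDerivAt_key (L : E → E → ℝ)
    (hL : Differentiable ℝ (fun p : E × E => L p.1 p.2)) (a b u w : E) :
    HasDerivAt (fun ε : ℝ => L (a + ε • u) (b + ε • w))
      (⟪gradient (fun x => L x b) a, u⟫ + ⟪gradient (fun y => L a y) b, w⟫) 0 := by
  set F := fun p : E × E => L p.1 p.2 with hF_def
  have hF : HasFDerivAt F (fderiv ℝ F (a, b)) (a, b) := (hL (a, b)).hasFDerivAt
  have h1 : HasDerivAt (fun ε : ℝ => a + ε • u) u 0 := by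
    simpa using ((hasDerivAt_id (0 : ℝ)).smul_const u).const_add a
  have h2 : HasDerivAt (fun ε : ℝ => b + ε • w) w 0 := by
    simpa using ((hasDerivAt_id (0 : ℝ)).smul_const w).const_add b
  have hc : HasDerivAt (fun ε : ℝ => (a + ε • u, b + ε • w)) (u, w) 0 := h1.prodMk h2
  have hc0 : (fun ε : ℝ => (a + ε • u, b + ε • w)) 0 = (a, b) := by simp
  have hF' : HasFDerivAt F (fderiv ℝ F (a, b)) ((fun ε : ℝ => (a + ε • u, b + ε • w)) 0) := by
    rw [hc0]; exact hF
  have hcomp : HasDerivAt (fun ε : ℝ => L (a + ε • u) (b + ε • w))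
      (fderiv ℝ F (a, b) (u, w)) 0 := by
    simpa [hF_def, Function.comp_def] using hF'.comp_hasDerivAt 0 hc
  convert hcomp using 1
  have hp1 : HasFDerivAt (fun x : E => L x b)
      ((fderiv ℝ F (a, b)).comp ((ContinuousLinearMap.id ℝ E).prod 0)) a :=
    hF.comp (f := fun x : E => (x, b)) a ((hasFDerivAt_id a).prodMk (hasFDerivAt_const b a))
  have hp2 : HasFDerivAt (fun y : E => L a y)
      ((fderiv ℝ F (a, b)).comp ((0 : E →L[ℝ] E).prod (ContinuousLinearMap.id ℝ E))) b :=
    hF.comp (f := fun y : E => (a, y)) b ((hasFDerivAt_const a b).prodMk (hasFDerivAt_id b))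
  rw [inner_gradient_eq', inner_gradient_eq', hp1.fderiv, hp2.fderiv]
  simp only [ContinuousLinearMap.coe_comp', Function.comp_apply, ContinuousLinearMap.prod_apply,
    ContinuousLinearMap.coe_id', id_eq, ContinuousLinearMap.zero_apply]
  rw [← map_add]
  simp [Prod.mk_add_mk]

omit [CompleteSpace E] in
private lemma sum_parts' {N : ℕ} (hN : 1 ≤ N) (a b v : ℕ → E) (hv0 : v 0 = 0) (hvN : v N = 0) :
    ∑ k ∈ Finset.range N, (⟪a k, v k⟫ + ⟪b k, v (k + 1)⟫)
      = ∑ k ∈ Finset.Ico 1 N, ⟪a k + b (k - 1), v k⟫ := by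
  rw [Finset.sum_add_distrib]
  have S1 : ∑ k ∈ Finset.range N, ⟪a k, v k⟫ = ∑ k ∈ Finset.Ico 1 N, ⟪a k, v k⟫ := by
    rw [Finset.range_eq_Ico, Finset.sum_eq_sum_Ico_succ_bot hN]
    simp [hv0]
  have S2 : ∑ k ∈ Finset.range N, ⟪b k, v (k + 1)⟫
      = ∑ k ∈ Finset.Ico 1 N, ⟪b (k - 1), v k⟫ := by
    have h1 : ∑ k ∈ Finset.Ico 1 (N + 1), ⟪b (k - 1), v k⟫
        = ∑ k ∈ Finset.range N, ⟪b k, v (k + 1)⟫ := by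
      rw [Finset.sum_Ico_eq_sum_range]
      simp [Nat.add_comm]
    rw [← h1, Finset.sum_Ico_succ_top hN]
    simp [hvN]
  rw [S1, S2, ← Finset.sum_add_distrib]
  exact Finset.sum_congr rfl fun k _ => (inner_add_left _ _ _).symm

end Aux

/-- Discrete Hamilton's principle is equivalent to the discrete Euler–Lagrange
equations: the variation of the discrete action vanishes for every variation
`v` with `v 0 = v N = 0` if and only if
`∇₁L(q_k, q_{k+1}) + ∇₂L(q_{k-1}, q_k) = 0` for all `k ∈ {1, …, N-1}`. -/
theorem discrete_hamilton_iff_discrete_euler_lagrange {n N : ℕ} (hN : 1 ≤ N)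
    (L : EuclideanSpace ℝ (Fin n) → EuclideanSpace ℝ (Fin n) → ℝ)
    (hL : Differentiable ℝ
      (fun p : EuclideanSpace ℝ (Fin n) × EuclideanSpace ℝ (Fin n) => L p.1 p.2))
    (q : ℕ → EuclideanSpace ℝ (Fin n)) :
    (∀ v : ℕ → EuclideanSpace ℝ (Fin n), v 0 = 0 → v N = 0 →
      deriv (fun ε : ℝ =>
        ∑ k ∈ Finset.range N, L (q k + ε • v k) (q (k + 1) + ε • v (k + 1))) 0 = 0)
    ↔ (∀ k, 1 ≤ k → k < N →
        gradient (fun x => L x (q (k + 1))) (q k)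
          + gradient (fun y => L (q (k - 1)) y) (q k) = 0) := by
  set a : ℕ → EuclideanSpace ℝ (Fin n) := fun k => gradient (fun x => L x (q (k + 1))) (q k) with ha
  set b : ℕ → EuclideanSpace ℝ (Fin n) := fun k => gradient (fun y => L (q k) y) (q (k + 1)) with hb
  -- the derivative of the action
  have hderiv : ∀ v : ℕ → EuclideanSpace ℝ (Fin n), v 0 = 0 → v N = 0 →
      deriv (fun ε : ℝ =>
        ∑ k ∈ Finset.range N, L (q k + ε • v k) (q (k + 1) + ε • v (k + 1))) 0
      = ∑ k ∈ Finset.Ico 1 N, ⟪a k + b (k - 1), v k⟫ := by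
    intro v hv0 hvN
    have h : HasDerivAt (fun ε : ℝ =>
        ∑ k ∈ Finset.range N, L (q k + ε • v k) (q (k + 1) + ε • v (k + 1)))
        (∑ k ∈ Finset.range N, (⟪a k, v k⟫ + ⟪b k, v (k + 1)⟫)) 0 :=
      HasDerivAt.fun_sum fun k _ => hasDerivAt_key L hL (q k) (q (k + 1)) (v k) (v (k + 1))
    rw [h.deriv]
    exact sum_parts' hN a b v hv0 hvN
  have hbk : ∀ k, 1 ≤ k → b (k - 1) = gradient (fun y => L (q (k - 1)) y) (q k) := by
    intro k hk
    simp only [hb]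
    rw [Nat.sub_add_cancel hk]
  constructor
  · intro H k hk1 hk2
    set c : EuclideanSpace ℝ (Fin n) := a k + b (k - 1) with hc
    set v : ℕ → EuclideanSpace ℝ (Fin n) := fun j => if j = k then c else 0 with hv
    have hv0 : v 0 = 0 := by simp [hv, (Nat.one_le_iff_ne_zero.mp hk1).symm]
    have hvN : v N = 0 := by simp [hv, Nat.ne_of_gt hk2]
    have := H v hv0 hvN
    rw [hderiv v hv0 hvN] at this
    have hsum : ∑ j ∈ Finset.Ico 1 N, ⟪a j + b (j - 1), v j⟫ = ⟪c, c⟫ := by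
      rw [Finset.sum_eq_single_of_mem k (Finset.mem_Ico.mpr ⟨hk1, hk2⟩)]
      · simp [hv, hc]
      · intro j _ hj
        simp [hv, hj]
    rw [hsum, inner_self_eq_zero] at this
    rw [← hbk k hk1, ← hc, this] -- goal : a k + b (k-1) = 0 form
  · intro H v hv0 hvN
    rw [hderiv v hv0 hvN]
    apply Finset.sum_eq_zero
    intro k hk
    obtain ⟨hk1, hk2⟩ := Finset.mem_Ico.mp hk
    have : a k + b (k - 1) = 0 := by
      rw [hbk k hk1]
      exact H k hk1 hk2
    rw [this, inner_zero_left]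
end

section
/- The discrete Lagrange–d'Alembert principle is equivalent to the forced discrete Euler–Lagrange equations: for a discrete trajectory q_0, …, q_N in ℝⁿ, one has δS_d(q; v) + W(q; v) = 0 for every variation v_0, …, v_N with v_0 = v_N = 0 if and only if ∇₁L_d(q_k, q_{k+1}) + ∇₂L_d(q_{k−1}, q_k) + Q⁻(q_k, q_{k+1}) + Q⁺(q_{k−1}, q_k) = 0 for every k ∈ {1, …, N−1}. -/
open scoped RealInnerProductSpace

variable {F : Type*} [NormedAddCommGroup F] [InnerProductSpace ℝ F] [CompleteSpace F]

lemma my_term_deriv (L : F → F → ℝ)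
    (hL : Differentiable ℝ (fun p : F × F => L p.1 p.2)) (a b va vb : F) :
    HasDerivAt (fun ε : ℝ => L (a + ε • va) (b + ε • vb))
      (⟪gradient (fun x => L x b) a, va⟫ + ⟪gradient (fun y => L a y) b, vb⟫) 0 := by
  set L' : F × F → ℝ := fun p => L p.1 p.2 with hL'
  set D := fderiv ℝ L' (a, b) with hD
  have hDf : HasFDerivAt L' D (a, b) := (hL (a, b)).hasFDerivAt
  have hφa : HasDerivAt (fun ε : ℝ => a + ε • va) va 0 := by
    simpa using ((hasDerivAt_id (0:ℝ)).smul_const va).const_add a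
  have hφb : HasDerivAt (fun ε : ℝ => b + ε • vb) vb 0 := by
    simpa using ((hasDerivAt_id (0:ℝ)).smul_const vb).const_add b
  have hφ : HasDerivAt (fun ε : ℝ => (a + ε • va, b + ε • vb)) (va, vb) 0 := hφa.prodMk hφb
  have hcomp : HasDerivAt (fun ε : ℝ => L (a + ε • va) (b + ε • vb)) (D (va, vb)) 0 := by
    have hDf' : HasFDerivAt L' D (a + (0:ℝ) • va, b + (0:ℝ) • vb) := by simpa using hDf
    have := hDf'.comp_hasDerivAt (x := (0:ℝ)) hφ
    exact this
  -- partial fderivs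
  have h1 : HasFDerivAt (fun x => L x b) (D.comp ((ContinuousLinearMap.id ℝ F).prod 0)) a := by
    have hι : HasFDerivAt (fun x : F => (x, b)) ((ContinuousLinearMap.id ℝ F).prod 0) a :=
      (hasFDerivAt_id a).prodMk (hasFDerivAt_const b a)
    exact hDf.comp a hι
  have h2 : HasFDerivAt (fun y => L a y) (D.comp (ContinuousLinearMap.prod 0 (ContinuousLinearMap.id ℝ F))) b := by
    have hι : HasFDerivAt (fun y : F => (a, y)) (ContinuousLinearMap.prod 0 (ContinuousLinearMap.id ℝ F)) b :=
      (hasFDerivAt_const a b).prodMk (hasFDerivAt_id b)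
    exact hDf.comp b hι
  have e1 : ⟪gradient (fun x => L x b) a, va⟫ = D (va, 0) := by
    rw [gradient, h1.fderiv, InnerProductSpace.toDual_symm_apply]
    simp
  have e2 : ⟪gradient (fun y => L a y) b, vb⟫ = D (0, vb) := by
    rw [gradient, h2.fderiv, InnerProductSpace.toDual_symm_apply]
    simp
  have : D (va, vb) = D (va, 0) + D (0, vb) := by
    rw [← map_add]; congr 1; simp [Prod.ext_iff]
  rw [e1, e2, ← this]
  exact hcomp

lemma my_rearrange {N : ℕ} (hN : 1 ≤ N) (A B : ℕ → F) (v : ℕ → F)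
    (h0 : v 0 = 0) (hNv : v N = 0) :
    ∑ k ∈ Finset.range N, (⟪A k, v k⟫ + ⟪B k, v (k + 1)⟫)
      = ∑ k ∈ Finset.Ico 1 N, ⟪A k + B (k - 1), v k⟫ := by
  rw [Finset.sum_add_distrib]
  have SA : ∑ k ∈ Finset.range N, ⟪A k, v k⟫ = ∑ k ∈ Finset.Ico 1 N, ⟪A k, v k⟫ := by
    rw [Finset.range_eq_Ico, Finset.sum_eq_sum_Ico_succ_bot hN]
    simp [h0]
  have SB : ∑ k ∈ Finset.range N, ⟪B k, v (k + 1)⟫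
      = ∑ k ∈ Finset.Ico 1 N, ⟪B (k - 1), v k⟫ := by
    have h1 : ∑ k ∈ Finset.Ico 1 (N + 1), ⟪B (k - 1), v k⟫
        = ∑ k ∈ Finset.range N, ⟪B k, v (k + 1)⟫ := by
      rw [Finset.sum_Ico_eq_sum_range]
      simp [Nat.add_comm 1]
    rw [← h1, Finset.sum_Ico_succ_top hN]
    simp [hNv]
  rw [SA, SB, ← Finset.sum_add_distrib]
  exact Finset.sum_congr rfl fun k _ => (inner_add_left _ _ _).symm

/-- The discrete Lagrange–d'Alembert principle is equivalent to the forced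
discrete Euler–Lagrange equations: `δS_d(q; v) + W(q; v) = 0` for every
variation `v` with `v 0 = v N = 0` if and only if
`∇₁L(q_k, q_{k+1}) + ∇₂L(q_{k-1}, q_k) + Q⁻(q_k, q_{k+1}) + Q⁺(q_{k-1}, q_k) = 0`
for every `k ∈ {1, …, N-1}`. -/
theorem discrete_lagrange_dalembert_iff_forced_euler_lagrange {n N : ℕ} (hN : 1 ≤ N)
    (L : EuclideanSpace ℝ (Fin n) → EuclideanSpace ℝ (Fin n) → ℝ)
    (hL : Differentiable ℝ
      (fun p : EuclideanSpace ℝ (Fin n) × EuclideanSpace ℝ (Fin n) => L p.1 p.2))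
    (Qminus Qplus : EuclideanSpace ℝ (Fin n) → EuclideanSpace ℝ (Fin n) →
      EuclideanSpace ℝ (Fin n))
    (q : ℕ → EuclideanSpace ℝ (Fin n)) :
    (∀ v : ℕ → EuclideanSpace ℝ (Fin n), v 0 = 0 → v N = 0 →
      deriv (fun ε : ℝ =>
          ∑ k ∈ Finset.range N, L (q k + ε • v k) (q (k + 1) + ε • v (k + 1))) 0
        + ∑ k ∈ Finset.range N,
            (⟪Qminus (q k) (q (k + 1)), v k⟫ + ⟪Qplus (q k) (q (k + 1)), v (k + 1)⟫)
        = 0)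
    ↔ (∀ k, 1 ≤ k → k < N →
        gradient (fun x => L x (q (k + 1))) (q k)
          + gradient (fun y => L (q (k - 1)) y) (q k)
          + Qminus (q k) (q (k + 1)) + Qplus (q (k - 1)) (q k) = 0) := by
  classical
  set E : ℕ → EuclideanSpace ℝ (Fin n) := fun k =>
    gradient (fun x => L x (q (k + 1))) (q k)
      + gradient (fun y => L (q (k - 1)) y) (q k)
      + Qminus (q k) (q (k + 1)) + Qplus (q (k - 1)) (q k) with hE
  have key : ∀ v : ℕ → EuclideanSpace ℝ (Fin n), v 0 = 0 → v N = 0 →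
      deriv (fun ε : ℝ =>
          ∑ k ∈ Finset.range N, L (q k + ε • v k) (q (k + 1) + ε • v (k + 1))) 0
        + ∑ k ∈ Finset.range N,
            (⟪Qminus (q k) (q (k + 1)), v k⟫ + ⟪Qplus (q k) (q (k + 1)), v (k + 1)⟫)
      = ∑ k ∈ Finset.Ico 1 N, ⟪E k, v k⟫ := by
    intro v h0 hNv
    have hder : deriv (fun ε : ℝ =>
        ∑ k ∈ Finset.range N, L (q k + ε • v k) (q (k + 1) + ε • v (k + 1))) 0
        = ∑ k ∈ Finset.range N,
            (⟪gradient (fun x => L x (q (k + 1))) (q k), v k⟫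
              + ⟪gradient (fun y => L (q k) y) (q (k + 1)), v (k + 1)⟫) := by
      refine HasDerivAt.deriv ?_
      exact HasDerivAt.fun_sum fun k _ => my_term_deriv L hL (q k) (q (k + 1)) (v k) (v (k + 1))
    rw [hder, ← Finset.sum_add_distrib]
    have hre := my_rearrange (F := EuclideanSpace ℝ (Fin n)) hN
      (fun k => gradient (fun x => L x (q (k + 1))) (q k) + Qminus (q k) (q (k + 1)))
      (fun k => gradient (fun y => L (q k) y) (q (k + 1)) + Qplus (q k) (q (k + 1)))
      v h0 hNv
    rw [show ∑ k ∈ Finset.range N,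
        ((⟪gradient (fun x => L x (q (k + 1))) (q k), v k⟫
          + ⟪gradient (fun y => L (q k) y) (q (k + 1)), v (k + 1)⟫)
        + (⟪Qminus (q k) (q (k + 1)), v k⟫ + ⟪Qplus (q k) (q (k + 1)), v (k + 1)⟫))
        = ∑ k ∈ Finset.range N,
          (⟪gradient (fun x => L x (q (k + 1))) (q k) + Qminus (q k) (q (k + 1)), v k⟫
            + ⟪gradient (fun y => L (q k) y) (q (k + 1)) + Qplus (q k) (q (k + 1)), v (k + 1)⟫)
      from Finset.sum_congr rfl fun k _ => by rw [inner_add_left, inner_add_left]; ring,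
      hre]
    refine Finset.sum_congr rfl fun k hk => ?_
    have hk1 := (Finset.mem_Ico.1 hk).1
    congr 1
    simp only [hE]
    rw [Nat.sub_add_cancel hk1]
    abel
  constructor
  · intro h k hk1 hk2
    set v : ℕ → EuclideanSpace ℝ (Fin n) := fun j => if j = k then E k else 0 with hv
    have h0 : v 0 = 0 := if_neg (by omega)
    have hNv : v N = 0 := if_neg (by omega)
    have := h v h0 hNv
    rw [key v h0 hNv] at this
    have hsum : ∑ j ∈ Finset.Ico 1 N, ⟪E j, v j⟫ = ⟪E k, E k⟫ := by
      rw [Finset.sum_eq_single_of_mem k (Finset.mem_Ico.2 ⟨hk1, hk2⟩)]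
      · simp [hv]
      · intro j _ hj; simp [hv, hj]
    rw [hsum] at this
    exact inner_self_eq_zero.mp this
  · intro h v h0 hNv
    rw [key v h0 hNv]
    refine Finset.sum_eq_zero fun k hk => ?_
    obtain ⟨hk1, hk2⟩ := Finset.mem_Ico.1 hk
    have hEk : E k = 0 := h k hk1 hk2
    rw [hEk, inner_zero_left]
end

section
/- The duration of the collision equals π t_γ: assuming additionally v ≠ 0, the least positive real number t such that x(t) = d/2 is t = π t_γ. In particular, in the undamped case γ = 0 the collision duration is t_C = π √(m/(2k)). -/
/-- The duration of the collision equals `π t_γ`: if `v ≠ 0`, the least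
positive time `t` with `x t = d/2` is `t = π t_γ`; in particular, for `γ = 0`
the collision duration is `t_C = π √(m/(2k))`. -/
theorem hookean_collision_duration
    (m k γ v d : ℝ) (hm : 0 < m) (hk : 0 < k) (hγ : 0 ≤ γ)
    (hγ2 : γ ^ 2 < 2 * k * m) (hv : v ≠ 0)
    (tγ : ℝ) (htγ : tγ = (Real.sqrt (2 * k / m - γ ^ 2 / m ^ 2))⁻¹)
    (x : ℝ → ℝ)
    (hx : ∀ t, x t = d / 2 - v * tγ * Real.exp (-γ * t / m) * Real.sin (t / tγ)) :
    IsLeast {t : ℝ | 0 < t ∧ x t = d / 2} (Real.pi * tγ) ∧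
    (γ = 0 → Real.pi * tγ = Real.pi * Real.sqrt (m / (2 * k))) := by
  have hpos : 0 < 2 * k / m - γ ^ 2 / m ^ 2 := by
    rw [sub_pos, div_lt_div_iff₀ (by positivity) (by positivity)]
    nlinarith
  have htγpos : 0 < tγ := by
    rw [htγ]; positivity
  have hne : tγ ≠ 0 := ne_of_gt htγpos
  -- x t = d/2 ↔ sin (t/tγ) = 0
  have hxiff : ∀ t, x t = d / 2 ↔ Real.sin (t / tγ) = 0 := by
    intro t
    rw [hx t]
    constructor
    · intro h
      have h2 : v * tγ * Real.exp (-γ * t / m) * Real.sin (t / tγ) = 0 := by linarith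
      have he : Real.exp (-γ * t / m) ≠ 0 := Real.exp_ne_zero _
      rcases mul_eq_zero.mp h2 with h3 | h3
      · exact absurd h3 (by
          intro h3
          rcases mul_eq_zero.mp h3 with h4 | h4
          · exact (mul_ne_zero hv hne) h4
          · exact he h4)
      · exact h3
    · intro h; rw [h]; ring
  constructor
  · constructor
    · refine ⟨by positivity, ?_⟩
      rw [hxiff]
      rw [mul_div_assoc, div_self hne, mul_one, Real.sin_pi]
    · rintro t ⟨ht, hxt⟩
      have hs := (hxiff t).mp hxt
      rw [Real.sin_eq_zero_iff] at hs
      obtain ⟨n, hn⟩ := hs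
      have hn1 : 1 ≤ n := by
        by_contra hlt
        push_neg at hlt
        have : (n : ℝ) ≤ 0 := by exact_mod_cast Int.lt_add_one_iff.mp hlt
        have : (n : ℝ) * Real.pi ≤ 0 :=
          mul_nonpos_of_nonpos_of_nonneg this Real.pi_pos.le
        have : t / tγ ≤ 0 := hn ▸ this
        have : t ≤ 0 := by
          have := mul_nonpos_of_nonpos_of_nonneg this htγpos.le
          rwa [div_mul_cancel₀ _ hne] at this
        linarith
      have : Real.pi ≤ (n : ℝ) * Real.pi := by
        nlinarith [Real.pi_pos, (by exact_mod_cast hn1 : (1:ℝ) ≤ n)]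
      have ht' : t = (n : ℝ) * Real.pi * tγ := by
        field_simp at hn; linarith [hn]
      rw [ht']
      nlinarith [Real.pi_pos]
  · intro hγ0
    subst hγ0
    congr 1
    rw [htγ]
    rw [show (0:ℝ) ^ 2 / m ^ 2 = 0 by ring, sub_zero, ← Real.sqrt_inv, inv_div]
end
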